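/- Suppose H(t) = t^p F(t) where F(t) = ∑_{j≥0} t^j F_j is a convergent power series with values in ℂ^{ℓ+1}, F₀ ≠ 0, and H satisfies 4t²H'' - (8t²/(1-t))H' + (4t/(1-t)²)(C₀+C₁)H = λH on (0,ε) for some ε > 0. Then λ = 4p(p-1). -/

import Mathlib

open Set

lemma hasDerivAt_comp_ofReal' {E : Type*} [NormedAddCommGroup E] [NormedSpace ℂ E]
    {f : ℂ → E} {f' : E} {z : ℝ} (hf : HasDerivAt f f' ↑z) :
    HasDerivAt (fun y : ℝ => f ↑y) f' z := by
  have h2 : HasDerivAt (fun y : ℝ => (y : ℂ)) 1 z := Complex.ofRealCLM.hasDerivAt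
  simpa [Function.comp_def] using HasDerivAt.scomp (x := z) hf h2


/-- If `H(t) = t^p F(t)` with `F(t) = ∑_j t^j F_j` a convergent power series
with values in `ℂ^{ℓ+1}` and `F₀ ≠ 0`, and `H` satisfies
`4t²H'' - (8t²/(1-t))H' + (4t/(1-t)²)(C₀+C₁)H = λH` on `(0,ε)`, then
`λ = 4p(p-1)`. -/
theorem stmt4 (ℓ : ℕ) (p lam : ℂ) (ε : ℝ) (hε : 0 < ε)
    (C₀ C₁ : Matrix (Fin (ℓ + 1)) (Fin (ℓ + 1)) ℂ)
    (hC₀ : ∀ i k : Fin (ℓ + 1), C₀ i k =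
      if (k : ℕ) + 1 = (i : ℕ) then ((i : ℕ) : ℂ) * ((ℓ : ℂ) - ((i : ℕ) : ℂ) + 1)
      else if k = i then -(((i : ℕ) : ℂ) * ((ℓ : ℂ) - ((i : ℕ) : ℂ) + 1))
      else 0)
    (hC₁ : ∀ i k : Fin (ℓ + 1), C₁ i k =
      if (k : ℕ) = (i : ℕ) + 1 then (((i : ℕ) : ℂ) + 1) * ((ℓ : ℂ) - ((i : ℕ) : ℂ))
      else if k = i then -((((i : ℕ) : ℂ) + 1) * ((ℓ : ℂ) - ((i : ℕ) : ℂ)))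
      else 0)
    (F : ℕ → Fin (ℓ + 1) → ℂ) (hF0 : F 0 ≠ 0)
    (H S : ℝ → Fin (ℓ + 1) → ℂ)
    (hS : ∀ t ∈ Ioo (0 : ℝ) ε, HasSum (fun j : ℕ => ((t : ℂ) ^ j) • F j) (S t))
    (hH : ∀ t ∈ Ioo (0 : ℝ) ε, H t = ((t : ℂ) ^ p) • S t)
    (hode : ∀ t ∈ Ioo (0 : ℝ) ε,
      (4 * (t : ℂ) ^ 2) • deriv (deriv H) t - (8 * (t : ℂ) ^ 2 / (1 - (t : ℂ))) • deriv H t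
        + (4 * (t : ℂ) / (1 - (t : ℂ)) ^ 2) • (C₀ + C₁).mulVec (H t) = lam • H t) :
    lam = 4 * p * (p - 1) := by
  classical
  set M := C₀ + C₁ with hM
  -- small radius
  set δ : ℝ := min ε 1 / 2 with hδdef
  have hδ0 : 0 < δ := by positivity
  have hδε : δ < ε := by
    have : min ε 1 ≤ ε := min_le_left _ _
    simp only [hδdef]; linarith
  have hδ1 : δ < 1 := by
    have : min ε 1 ≤ 1 := min_le_right _ _
    simp only [hδdef]; linarith
  -- the formal power series
  set q : FormalMultilinearSeries ℂ ℂ (Fin (ℓ + 1) → ℂ) :=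
    fun n => ContinuousMultilinearMap.mkPiRing ℂ (Fin n) (F n) with hq
  have hqapp : ∀ (n : ℕ) (y : ℂ), (q n fun _ => y) = y ^ n • F n := by
    intro n y
    simp [hq, ContinuousMultilinearMap.mkPiRing_apply]
  -- radius bound
  have hrad : ENNReal.ofReal δ ≤ q.radius := by
    have hsum := (hS δ ⟨hδ0, hδε⟩).summable
    have htend : Filter.Tendsto (fun n => ‖((δ:ℂ) ^ n) • F n‖) Filter.atTop (nhds 0) := by
      simpa using hsum.tendsto_atTop_zero.norm
    obtain ⟨C, hC⟩ := htend.bddAbove_range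
    refine q.le_radius_of_bound C (r := δ.toNNReal) fun n => ?_
    have h1 : ‖q n‖ = ‖F n‖ := ContinuousMultilinearMap.norm_mkPiRing ..
    have h2 : ‖((δ:ℂ) ^ n) • F n‖ = ‖F n‖ * δ ^ n := by
      rw [norm_smul, norm_pow, Complex.norm_real, Real.norm_eq_abs, abs_of_pos hδ0, mul_comm]
    have := hC ⟨n, rfl⟩
    rw [h1, Real.coe_toNNReal _ hδ0.le, ← h2]
    exact this
  have hq0 : 0 < q.radius := lt_of_lt_of_le (by simp [ENNReal.ofReal_pos, hδ0]) hrad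
  set f : ℂ → (Fin (ℓ + 1) → ℂ) := q.sum with hfdef
  have hball : HasFPowerSeriesOnBall f q 0 q.radius := q.hasFPowerSeriesOnBall hq0
  have hmemball : ∀ z : ℂ, ‖z‖ < δ → z ∈ Metric.eball (0:ℂ) q.radius := by
    intro z hz
    rw [mem_emetric_ball_zero_iff]
    calc (‖z‖₊ : ENNReal) = ENNReal.ofReal ‖z‖ := (ofReal_norm z).symm
    _ < ENNReal.ofReal δ := (ENNReal.ofReal_lt_ofReal_iff hδ0).mpr hz
    _ ≤ q.radius := hrad
  have hanal : AnalyticOnNhd ℂ f (Metric.eball (0:ℂ) q.radius) := hball.analyticOnNhd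
  have hanal1 : AnalyticOnNhd ℂ (deriv f) (Metric.eball (0:ℂ) q.radius) := hanal.deriv
  have hanal2 : AnalyticOnNhd ℂ (deriv (deriv f)) (Metric.eball (0:ℂ) q.radius) := hanal1.deriv
  -- f 0 = F 0
  have hf0 : f 0 = F 0 := by
    have := hball.coeff_zero (fun _ => 0)
    rw [← this, hqapp]
    simp
  -- S = f on (0, δ)
  have hSf : ∀ t ∈ Ioo (0:ℝ) δ, S t = f ↑t := by
    intro t ht
    have hz : ((t:ℂ)) ∈ Metric.eball (0:ℂ) q.radius := by
      apply hmemball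
      rw [Complex.norm_real, Real.norm_eq_abs, abs_of_pos ht.1]
      exact ht.2
    have h1 : HasSum (fun n => ((t:ℂ) ^ n) • F n) (f ↑t) := by
      have := q.hasSum hz
      simpa only [hqapp] using this
    exact (hS t ⟨ht.1, ht.2.trans hδε⟩).unique h1
  -- derivatives on ℂ
  set D1 : ℂ → (Fin (ℓ + 1) → ℂ) := deriv f with hD1def
  set D2 : ℂ → (Fin (ℓ + 1) → ℂ) := deriv D1 with hD2def
  have hballmem : ∀ t : ℝ, t ∈ Ioo (0:ℝ) δ → ((t:ℂ)) ∈ Metric.eball (0:ℂ) q.radius := by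
    intro t ht
    apply hmemball
    rw [Complex.norm_real, Real.norm_eq_abs, abs_of_pos ht.1]
    exact ht.2
  set g : ℝ → (Fin (ℓ+1) → ℂ) := fun t => ((t:ℂ) ^ p) • f ↑t with hgdef
  set G1 : ℝ → (Fin (ℓ+1) → ℂ) := fun t =>
    ((t:ℂ) ^ p) • D1 ↑t + (p * (t:ℂ) ^ (p-1)) • f ↑t with hG1def
  set G2 : ℝ → (Fin (ℓ+1) → ℂ) := fun t =>
    (((t:ℂ) ^ p) • D2 ↑t + (p * (t:ℂ) ^ (p-1)) • D1 ↑t)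
      + ((p * (t:ℂ) ^ (p-1)) • D1 ↑t + (p * ((p-1) * (t:ℂ) ^ (p-2))) • f ↑t) with hG2def
  have hcpow : ∀ (c : ℂ) (t : ℝ), 0 < t →
      HasDerivAt (fun s : ℝ => ((s:ℂ)) ^ c) (c * (t:ℂ) ^ (c-1)) t := fun c t ht =>
    ((Complex.hasStrictDerivAt_cpow_const
      (Complex.ofReal_mem_slitPlane.2 ht)).hasDerivAt).comp_ofReal
  have hfR : ∀ t ∈ Ioo (0:ℝ) δ, HasDerivAt (fun s : ℝ => f ↑s) (D1 ↑t) t := fun t ht =>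
    hasDerivAt_comp_ofReal' ((hanal _ (hballmem t ht)).differentiableAt.hasDerivAt)
  have hD1R : ∀ t ∈ Ioo (0:ℝ) δ, HasDerivAt (fun s : ℝ => D1 ↑s) (D2 ↑t) t := fun t ht =>
    hasDerivAt_comp_ofReal' ((hanal1 _ (hballmem t ht)).differentiableAt.hasDerivAt)
  have hg' : ∀ t ∈ Ioo (0:ℝ) δ, HasDerivAt g (G1 t) t := by
    intro t ht
    exact (hcpow p t ht.1).smul (hfR t ht)
  have hG1' : ∀ t ∈ Ioo (0:ℝ) δ, HasDerivAt G1 (G2 t) t := by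
    intro t ht
    have h1 := (hcpow p t ht.1).smul (hD1R t ht)
    have h2c := (hcpow (p-1) t ht.1).const_mul p
    have hexp : p - 1 - 1 = p - 2 := by ring
    rw [hexp] at h2c
    have h2 := h2c.smul (hfR t ht)
    exact h1.add h2
  have hHg : EqOn H g (Ioo (0:ℝ) δ) := by
    intro t ht
    rw [hH t ⟨ht.1, ht.2.trans hδε⟩, hSf t ht]
  have hdH : ∀ t ∈ Ioo (0:ℝ) δ, deriv H t = G1 t := by
    intro t ht
    have hev : H =ᶠ[nhds t] g := Filter.eventuallyEq_of_mem (isOpen_Ioo.mem_nhds ht) hHg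
    rw [hev.deriv_eq]
    exact (hg' t ht).deriv
  have hdH2 : ∀ t ∈ Ioo (0:ℝ) δ, deriv (deriv H) t = G2 t := by
    intro t ht
    have hev : deriv H =ᶠ[nhds t] G1 :=
      Filter.eventuallyEq_of_mem (isOpen_Ioo.mem_nhds ht) fun s hs => hdH s hs
    rw [hev.deriv_eq]
    exact (hG1' t ht).deriv
  -- the rescaled equation
  set Φ : ℝ → (Fin (ℓ+1) → ℂ) := fun t =>
    (4*p*(p-1)) • f ↑t + (8*p*(t:ℂ)) • D1 ↑t + (4*(t:ℂ)^2) • D2 ↑t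
      - (8*p*(t:ℂ)/(1-(t:ℂ))) • f ↑t - (8*(t:ℂ)^2/(1-(t:ℂ))) • D1 ↑t
      + (4*(t:ℂ)/(1-(t:ℂ))^2) • M.mulVec (f ↑t) - lam • f ↑t with hΦdef
  have hΦ0 : ∀ t ∈ Ioo (0:ℝ) δ, Φ t = 0 := by
    intro t ht
    have htc : ((t:ℂ)) ≠ 0 := by exact_mod_cast ht.1.ne'
    have htne1 : ((t:ℂ)) ≠ 1 := by exact_mod_cast (ht.2.trans hδ1).ne
    have hne : (1 - (t:ℂ)) ≠ 0 := sub_ne_zero.mpr (Ne.symm htne1)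
    have htp : ((t:ℂ)) ^ p ≠ 0 := by
      simp [Complex.cpow_eq_zero_iff, htc]
    have e1 : ((t:ℂ)) ^ (p-1) = (t:ℂ)^p / (t:ℂ) := by
      rw [Complex.cpow_sub _ _ htc, Complex.cpow_one]
    have e2 : ((t:ℂ)) ^ (p-2) = (t:ℂ)^p / (t:ℂ)^2 := by
      rw [Complex.cpow_sub _ _ htc]
      norm_num [Complex.cpow_natCast]
    have hodet := hode t ⟨ht.1, ht.2.trans hδε⟩
    rw [hdH2 t ht, hdH t ht, hH t ⟨ht.1, ht.2.trans hδε⟩, hSf t ht] at hodet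
    have key : ((t:ℂ)^p) • Φ t = 0 := by
      rw [← sub_eq_zero.mpr hodet]
      simp only [hΦdef, hG1def, hG2def, Matrix.mulVec_smul, e1, e2]
      match_scalars <;> field_simp <;> ring
    rcases smul_eq_zero.mp key with h | h
    · exact absurd h htp
    · exact h
  -- continuity at 0
  have h0mem : ((0:ℝ):ℂ) ∈ Metric.eball (0:ℂ) q.radius := by
    simpa using Metric.mem_eball_self (x := (0:ℂ)) hq0
  have k1 : ContinuousAt (fun t : ℝ => ((t:ℂ))) 0 := Complex.continuous_ofReal.continuousAt
  have hcf : ContinuousAt (fun t : ℝ => f ↑t) 0 :=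
    ((hanal _ h0mem).continuousAt).comp k1
  have hcd1 : ContinuousAt (fun t : ℝ => D1 ↑t) 0 :=
    ((hanal1 _ h0mem).continuousAt).comp k1
  have hcd2 : ContinuousAt (fun t : ℝ => D2 ↑t) 0 :=
    ((hanal2 _ h0mem).continuousAt).comp k1
  have hmv : Continuous (fun v : Fin (ℓ+1) → ℂ => M.mulVec v) := by
    have h := LinearMap.continuous_of_finiteDimensional (M.mulVecLin)
    have he : (fun v : Fin (ℓ+1) → ℂ => M.mulVec v) = ⇑M.mulVecLin := by
      ext v i
      rw [Matrix.mulVecLin_apply]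
    rw [he]
    exact h
  have hcmv : ContinuousAt (fun t : ℝ => M.mulVec (f ↑t)) 0 := hmv.continuousAt.comp hcf
  have hne0 : (1 - (((0:ℝ)):ℂ)) ≠ 0 := by norm_num
  have s1 : ContinuousAt (fun t : ℝ => 8*p*(t:ℂ)) 0 := continuousAt_const.mul k1
  have s2 : ContinuousAt (fun t : ℝ => 4*(t:ℂ)^2) 0 := continuousAt_const.mul (k1.pow 2)
  have sden : ContinuousAt (fun t : ℝ => 1 - (t:ℂ)) 0 := continuousAt_const.sub k1
  have s3 : ContinuousAt (fun t : ℝ => 8*p*(t:ℂ)/(1-(t:ℂ))) 0 := s1.div sden hne0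
  have s4 : ContinuousAt (fun t : ℝ => 8*(t:ℂ)^2/(1-(t:ℂ))) 0 :=
    (continuousAt_const.mul (k1.pow 2)).div sden hne0
  have s5 : ContinuousAt (fun t : ℝ => 4*(t:ℂ)/(1-(t:ℂ))^2) 0 :=
    (continuousAt_const.mul k1).div (sden.pow 2) (by simpa using pow_ne_zero 2 hne0)
  have hΦc : ContinuousAt Φ 0 :=
    ((((((continuousAt_const.fun_smul hcf).add (s1.fun_smul hcd1)).add (s2.fun_smul hcd2)).sub
      (s3.fun_smul hcf)).sub (s4.fun_smul hcd1)).add (s5.fun_smul hcmv)).sub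
      (continuousAt_const.fun_smul hcf)
  -- take the limit t → 0⁺
  have hmemI : Ioo (0:ℝ) δ ∈ nhdsWithin (0:ℝ) (Ioi 0) :=
    Ioo_mem_nhdsGT_of_mem ⟨le_refl 0, hδ0⟩
  have hT1 : Filter.Tendsto Φ (nhdsWithin (0:ℝ) (Ioi 0)) (nhds (Φ 0)) :=
    (hΦc.tendsto).mono_left nhdsWithin_le_nhds
  have hT2 : Filter.Tendsto Φ (nhdsWithin (0:ℝ) (Ioi 0)) (nhds 0) := by
    refine Filter.Tendsto.congr' ?_ tendsto_const_nhds
    exact Filter.eventuallyEq_of_mem hmemI fun s hs => (hΦ0 s hs).symm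
  have hΦat0 : Φ 0 = 0 := tendsto_nhds_unique hT1 hT2
  have hfin : (4*p*(p-1) - lam) • F 0 = 0 := by
    have h := hΦat0
    simp only [hΦdef, Complex.ofReal_zero, hf0] at h
    rw [sub_smul]
    simpa using h
  rcases smul_eq_zero.mp hfin with h | h
  · linear_combination -h
  · exact absurd h hF0
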